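/- Let p be an odd prime, 1 ≤ s,t ≤ p−1, and let A, B be subsets of Z_p with |A| = s, |B| = t. Define f(s,t) = 0 if 2t ≤ p−s+1; f(s,t) = ⌊(s+2t−p)²/4⌋ if p−s+2 ≤ 2t ≤ p+s−2; f(s,t) = s(2t−p) if 2t ≥ p+s−1. Define g(s,t) = t² if 2t ≤ s; g(s,t) = ⌈s(4t−s)/4⌉ if s+1 ≤ 2t ≤ 2p−s−1; g(s,t) = s(2t−p)+(p−t)² if 2t ≥ 2p−s. Then f(s,t) ≤ r(A,B,B) ≤ g(s,t). -/

import Mathlib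

open Finset Pointwise


/-- Lower bound function f(s,t); integer division `/` on nonnegative numerators is the floor. -/
def fBound (p s t : ℤ) : ℤ :=
  if 2 * t ≤ p - s + 1 then 0
  else if 2 * t ≤ p + s - 2 then (s + 2 * t - p) ^ 2 / 4
  else s * (2 * t - p)

/-- Upper bound function g(s,t); `(x+3)/4` is the ceiling of x/4. -/
def gBound (p s t : ℤ) : ℤ :=
  if 2 * t ≤ s then t ^ 2
  else if 2 * t ≤ 2 * p - s - 1 then (s * (4 * t - s) + 3) / 4
  else s * (2 * t - p) + (p - t) ^ 2


namespace Stmt10Aux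



variable {p : ℕ}

/-- number of `b ∈ B` with `b + a ∈ B`. -/
def Nc (B : Finset (ZMod p)) (a : ZMod p) : ℕ := (B.filter (fun b => b + a ∈ B)).card

/-- number of `b ∈ B` with `b + a ∉ B`. -/
def Dc (B : Finset (ZMod p)) (a : ZMod p) : ℕ := (B.filter (fun b => b + a ∉ B)).card

lemma Nc_add_Dc (B : Finset (ZMod p)) (a : ZMod p) : Nc B a + Dc B a = B.card := by
  classical
  simpa [Nc, Dc] using Finset.card_filter_add_card_filter_not
    (s := B) (p := fun b => b + a ∈ B)

lemma Dc_zero (B : Finset (ZMod p)) : Dc B 0 = 0 := by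
  simp [Dc, Finset.filter_eq_empty_iff]

lemma Dc_le_card (B : Finset (ZMod p)) (a : ZMod p) : Dc B a ≤ B.card :=
  Finset.card_le_card (Finset.filter_subset _ _)

lemma Nc_neg [NeZero p] (B : Finset (ZMod p)) (a : ZMod p) : Nc B (-a) = Nc B a := by
  classical
  apply Finset.card_bij (fun b _ => b + -a)
  · intro b hb
    simp only [Nc, Finset.mem_filter] at hb ⊢
    exact ⟨hb.2, by simpa using hb.1⟩
  · intro b _ b' _ h
    exact by simpa using h
  · intro c hc
    simp only [Nc, Finset.mem_filter] at hc
    exact ⟨c + a, Finset.mem_filter.mpr ⟨hc.2, by simpa using hc.1⟩, by simp⟩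

lemma Dc_neg [NeZero p] (B : Finset (ZMod p)) (a : ZMod p) : Dc B (-a) = Dc B a := by
  have h1 := Nc_add_Dc B (-a)
  have h2 := Nc_add_Dc B a
  have h3 := Nc_neg B a
  omega

lemma card_le_p [NeZero p] (B : Finset (ZMod p)) : B.card ≤ p := by
  have := Finset.card_le_card (Finset.subset_univ B)
  simpa [Finset.card_univ, ZMod.card] using this

lemma Dc_le_compl [NeZero p] (B : Finset (ZMod p)) (a : ZMod p) : Dc B a ≤ p - B.card := by
  classical
  have h : Dc B a ≤ (Finset.univ.filter (fun x : ZMod p => x ∉ B)).card := by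
    apply Finset.card_le_card_of_injOn (fun b => b + a)
    · intro b hb
      simp only [Dc, Finset.mem_coe, Finset.mem_filter] at hb
      simp [hb.2]
    · intro b _ b' _ h
      exact by simpa using h
  have h2 : (Finset.univ.filter (fun x : ZMod p => x ∉ B)).card = p - B.card := by
    have := Finset.card_filter_add_card_filter_not
      (s := (Finset.univ : Finset (ZMod p))) (p := fun x => x ∈ B)
    simp only [Finset.filter_mem_eq_inter, Finset.univ_inter, Finset.card_univ] at this
    have hc : Fintype.card (ZMod p) = p := ZMod.card p
    omega
  omega

lemma Dc_triangle [NeZero p] (B : Finset (ZMod p)) (g h : ZMod p) :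
    Dc B (g + h) ≤ Dc B g + Dc B h := by
  classical
  have hsub : B.filter (fun b => b + (g + h) ∉ B) ⊆
      (B.filter (fun b => b + g ∉ B)) ∪ (B.filter (fun b => b + g ∈ B ∧ b + g + h ∉ B)) := by
    intro b hb
    simp only [Finset.mem_filter, Finset.mem_union] at hb ⊢
    by_cases hg : b + g ∈ B
    · exact Or.inr ⟨hb.1, hg, by rw [add_assoc]; exact hb.2⟩
    · exact Or.inl ⟨hb.1, hg⟩
  calc Dc B (g + h) ≤ _ := Finset.card_le_card hsub
    _ ≤ (B.filter (fun b => b + g ∉ B)).card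
        + (B.filter (fun b => b + g ∈ B ∧ b + g + h ∉ B)).card := Finset.card_union_le _ _
    _ ≤ Dc B g + Dc B h := by
        apply Nat.add_le_add_left
        apply Finset.card_le_card_of_injOn (fun b => b + g)
        · intro b hb
          simp only [Finset.mem_coe, Finset.mem_filter] at hb ⊢
          exact ⟨hb.2.1, hb.2.2⟩
        · intro b _ b' _ h
          exact by simpa using h

lemma sum_Nc [NeZero p] (B : Finset (ZMod p)) :
    ∑ a : ZMod p, Nc B a = B.card * B.card := by
  classical
  have h1 : ∀ b : ZMod p, (Finset.univ.filter (fun a : ZMod p => b + a ∈ B)).card = B.card := by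
    intro b
    apply Finset.card_bij (fun a _ => b + a)
    · intro a ha; simpa using (Finset.mem_filter.mp ha).2
    · intro a _ a' _ h; exact by simpa using h
    · intro c hc; exact ⟨c - b, by simp [hc], by ring⟩
  calc ∑ a : ZMod p, Nc B a
      = ∑ a : ZMod p, ∑ b ∈ B, if b + a ∈ B then 1 else 0 := by
        refine Finset.sum_congr rfl (fun a _ => ?_)
        rw [Nc, Finset.card_filter]
    _ = ∑ b ∈ B, ∑ a : ZMod p, if b + a ∈ B then 1 else 0 := Finset.sum_comm
    _ = ∑ b ∈ B, (Finset.univ.filter (fun a : ZMod p => b + a ∈ B)).card := by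
        refine Finset.sum_congr rfl (fun b _ => ?_)
        rw [Finset.card_filter]
    _ = ∑ _b ∈ B, B.card := Finset.sum_congr rfl (fun b _ => h1 b)
    _ = B.card * B.card := by simp [mul_comm]

lemma sum_Dc [NeZero p] (B : Finset (ZMod p)) :
    ∑ a : ZMod p, Dc B a = B.card * (p - B.card) := by
  classical
  have h1 : ∑ a : ZMod p, Dc B a + ∑ a : ZMod p, Nc B a = p * B.card := by
    rw [← Finset.sum_add_distrib]
    have he : ∀ a : ZMod p, Dc B a + Nc B a = B.card := by
      intro a; have := Nc_add_Dc B a; omega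
    rw [Finset.sum_congr rfl (fun a _ => he a)]
    simp [Finset.card_univ, ZMod.card]
  have h2 := sum_Nc B
  have hBp : B.card ≤ p := card_le_p B
  zify [hBp]
  push_cast at h1 h2
  linarith




/-- ball of radius j for the `Dc` metric -/
def ball [NeZero p] (B : Finset (ZMod p)) (j : ℕ) : Finset (ZMod p) :=
  Finset.univ.filter (fun g => Dc B g ≤ j)

lemma zero_mem_ball [NeZero p] (B : Finset (ZMod p)) (j : ℕ) (hz : Dc B 0 = 0) :
    (0 : ZMod p) ∈ ball B j := by
  simp [ball, hz]

lemma ball_mono [NeZero p] (B : Finset (ZMod p)) {i j : ℕ} (h : i ≤ j) : ball B i ⊆ ball B j := by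
  intro g hg
  simp only [ball, Finset.mem_filter] at hg ⊢
  exact ⟨hg.1, le_trans hg.2 h⟩

lemma ball_card_le [NeZero p] (B : Finset (ZMod p)) (j : ℕ) : (ball B j).card ≤ p := by
  have := Finset.card_le_card (Finset.subset_univ (ball B j))
  simpa [Finset.card_univ, ZMod.card] using this

lemma two_unit [NeZero p] (hodd : Odd p) : IsUnit (2 : ZMod p) := by
  have hco : Nat.Coprime 2 p := Nat.coprime_two_left.mpr hodd
  have := (ZMod.isUnit_iff_coprime 2 p).mpr hco
  simpa using this

/-- generic: a finset of `ZMod p` (p odd) closed under negation and not containing 0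
has even cardinality. -/
lemma even_card_of_neg_closed [NeZero p] (hodd : Odd p) :
    ∀ (S : Finset (ZMod p)), (∀ x ∈ S, -x ∈ S) → (0 : ZMod p) ∉ S → Even S.card := by
  classical
  intro S
  induction S using Finset.strongInduction with
  | _ S ih =>
    intro hneg h0
    rcases S.eq_empty_or_nonempty with rfl | ⟨x, hx⟩
    · simp
    · have hxne : x ≠ 0 := fun h => h0 (h ▸ hx)
      have hnx : -x ∈ S := hneg x hx
      have hxnx : -x ≠ x := by
        intro h
        apply hxne
        have h2 : (2 : ZMod p) * x = 0 := by
          have hxx : x + x = 0 := by nth_rewrite 1 [← h]; simp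
          rw [two_mul]; exact hxx
        exact ((two_unit hodd).mul_right_eq_zero).mp h2
      have hmem : -x ∈ S.erase x := Finset.mem_erase.mpr ⟨hxnx, hnx⟩
      have hsub : (S.erase x).erase (-x) ⊂ S := by
        apply Finset.ssubset_of_subset_of_ssubset
        · exact Finset.erase_subset _ _
        · exact Finset.erase_ssubset hx
      have hcard : ((S.erase x).erase (-x)).card = S.card - 2 := by
        have e1 := Finset.card_erase_of_mem hx
        have e2 := Finset.card_erase_of_mem hmem
        have hp1 : 1 ≤ S.card := Finset.card_pos.mpr ⟨x, hx⟩
        have hp2 : 1 ≤ (S.erase x).card := Finset.card_pos.mpr ⟨-x, hmem⟩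
        omega
      have hneg' : ∀ y ∈ (S.erase x).erase (-x), -y ∈ (S.erase x).erase (-x) := by
        intro y hy
        simp only [Finset.mem_erase] at hy ⊢
        refine ⟨?_, ?_, hneg y hy.2.2⟩
        · intro h; exact hy.2.1 (by rw [← neg_neg y, h, neg_neg])
        · intro h; exact hy.1 (by rw [← neg_neg y, h])
      have h0' : (0 : ZMod p) ∉ (S.erase x).erase (-x) := by
        simp only [Finset.mem_erase]
        intro h; exact h0 h.2.2
      have heven := ih _ hsub hneg' h0'
      have hS2 : 2 ≤ S.card := by
        have hsub2 : ({x, -x} : Finset (ZMod p)) ⊆ S := by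
          intro y hy
          simp only [Finset.mem_insert, Finset.mem_singleton] at hy
          rcases hy with rfl | rfl
          · exact hx
          · exact hnx
        have h2 : ({x, -x} : Finset (ZMod p)).card = 2 := by
          rw [Finset.card_insert_of_notMem (by simpa using hxnx.symm)]
          simp
        calc 2 = _ := h2.symm
          _ ≤ S.card := Finset.card_le_card hsub2
      rcases heven with ⟨m, hm⟩
      exact ⟨m + 1, by omega⟩

lemma ball_card_odd [NeZero p] (hodd : Odd p) (B : Finset (ZMod p))
    (hz : Dc B 0 = 0) (hneg : ∀ a : ZMod p, Dc B (-a) = Dc B a) (j : ℕ) :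
    Odd (ball B j).card := by
  classical
  have h0 : (0 : ZMod p) ∈ ball B j := zero_mem_ball B j hz
  have he : Even ((ball B j).erase 0).card := by
    apply even_card_of_neg_closed hodd
    · intro x hx
      simp only [ball, Finset.mem_erase, Finset.mem_filter] at hx ⊢
      exact ⟨by simpa using hx.1, by simp, by rw [hneg]; exact hx.2.2⟩
    · simp
  have hc := Finset.card_erase_of_mem h0
  rcases he with ⟨m, hm⟩
  have hpos : 1 ≤ (ball B j).card := Finset.card_pos.mpr ⟨0, h0⟩
  exact ⟨m, by omega⟩

lemma ball_mono' [NeZero p] (B : Finset (ZMod p)) {i j : ℕ} (h : i ≤ j) : ball B i ⊆ ball B j := by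
  intro g hg
  simp only [ball, Finset.mem_filter] at hg ⊢
  exact ⟨hg.1, le_trans hg.2 h⟩

lemma ball_nonempty [NeZero p] (B : Finset (ZMod p)) (j : ℕ) : (ball B j).Nonempty :=
  ⟨0, by simp [ball, Dc_zero]⟩

lemma ball_add_subset [NeZero p] (B : Finset (ZMod p)) (i j : ℕ) :
    ball B i + ball B j ⊆ ball B (i + j) := by
  intro x hx
  rw [Finset.mem_add] at hx
  obtain ⟨y, hy, z, hz, rfl⟩ := hx
  simp only [ball, Finset.mem_filter] at hy hz ⊢
  exact ⟨Finset.mem_univ _, le_trans (Dc_triangle B y z) (Nat.add_le_add hy.2 hz.2)⟩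

lemma cd_ball [NeZero p] (hp : p.Prime) (B : Finset (ZMod p)) (i j : ℕ) :
    min p ((ball B i).card + (ball B j).card - 1) ≤ (ball B (i + j)).card := by
  calc min p ((ball B i).card + (ball B j).card - 1)
      ≤ (ball B i + ball B j).card :=
        ZMod.cauchy_davenport hp (ball_nonempty B i) (ball_nonempty B j)
    _ ≤ (ball B (i + j)).card := Finset.card_le_card (ball_add_subset B i j)

def Msum [NeZero p] (B : Finset (ZMod p)) (k : ℕ) : ℕ := ∑ g : ZMod p, min k (Dc B g)

lemma Msum_succ [NeZero p] (B : Finset (ZMod p)) (k : ℕ) :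
    Msum B (k + 1) = Msum B k + (p - (ball B k).card) := by
  classical
  have hpt : ∀ g : ZMod p, min (k+1) (Dc B g) =
      min k (Dc B g) + (if Dc B g ≤ k then 0 else 1) := by
    intro g; by_cases h : Dc B g ≤ k <;> simp [h] <;> omega
  have h2 : (Msum B (k+1) : ℕ) = Msum B k + ∑ g : ZMod p, (if Dc B g ≤ k then 0 else 1) := by
    rw [Msum, Msum, Finset.sum_congr rfl (fun g _ => hpt g), Finset.sum_add_distrib]
  rw [h2]
  congr 1
  have : ∑ g : ZMod p, (if Dc B g ≤ k then 0 else 1)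
      = (Finset.univ.filter (fun g : ZMod p => ¬ (Dc B g ≤ k))).card := by
    rw [Finset.card_filter]
    exact Finset.sum_congr rfl (fun g _ => by by_cases h : Dc B g ≤ k <;> simp [h])
  rw [this]
  have hsplit := Finset.card_filter_add_card_filter_not
    (s := (Finset.univ : Finset (ZMod p))) (p := fun g => Dc B g ≤ k)
  have hc : (Finset.univ : Finset (ZMod p)).card = p := by
    simp [Finset.card_univ, ZMod.card]
  have hb : (ball B k).card = (Finset.univ.filter (fun g : ZMod p => Dc B g ≤ k)).card := rfl
  omega

lemma Msum_zero [NeZero p] (B : Finset (ZMod p)) : Msum B 0 = 0 := by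
  simp [Msum]

/-- THE KEY LEMMA: Pollard-type bound for the cut function `Dc`. -/
theorem key_lemma [NeZero p] (hp : p.Prime) (hodd : Odd p) (B : Finset (ZMod p)) :
    ∀ d k : ℕ, k + d = min B.card (p - B.card) → k * (p - k) ≤ Msum B k := by
  intro d
  induction d with
  | zero =>
    intro k hk
    rw [Nat.add_zero] at hk
    have ht : ∀ g : ZMod p, min k (Dc B g) = Dc B g := by
      intro g
      have h1 := Dc_le_card B g
      have h2 := Dc_le_compl B g
      have : Dc B g ≤ k := by omega
      omega
    have : Msum B k = B.card * (p - B.card) := by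
      rw [Msum, Finset.sum_congr rfl (fun g _ => ht g)]
      exact sum_Dc B
    rw [this]
    have hbp : B.card ≤ p := card_le_p B
    have hc := Nat.le_total B.card (p - B.card)
    rcases hc with h | h
    · have hkB : k = B.card := by omega
      subst hkB
      exact le_refl _
    · have hkB : k = p - B.card := by omega
      subst hkB
      have e : p - (p - B.card) = B.card := by omega
      rw [e, mul_comm]
  | succ d ih =>
    intro k hk
    have hIH := ih (k + 1) (by omega)
    have hsucc := Msum_succ B k
    have hble := ball_card_le (B := B) k
    -- bounds: k+1 ≤ min ≤ p/2
    have hbp : B.card ≤ p := card_le_p B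
    have hmin2 : 2 * min B.card (p - B.card) ≤ p := by
      have := Nat.le_total B.card (p - B.card)
      rcases this with h | h
      · have : min B.card (p - B.card) = B.card := by omega
        omega
      · have : min B.card (p - B.card) = p - B.card := by omega
        omega
    have hkp : 2 * k + 2 ≤ p := by omega
    by_cases hb : 2 * k + 1 ≤ (ball B k).card
    · -- downward step
      have h1 : (k+1) * (p - (k+1)) ≤ Msum B k + (p - (ball B k).card) := by
        rw [← hsucc]; exact hIH
      zify [show 2*k+1 ≤ p by omega, show k+1 ≤ p by omega, show k ≤ p by omega,
        hble, hb] at h1 ⊢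
      nlinarith [h1]
    · -- direct: small balls
      push_neg at hb
      have hodd_ball := ball_card_odd hodd B (Dc_zero B) (fun a => Dc_neg B a) k
      have hble' : (ball B k).card ≤ 2 * k - 1 := by
        rcases hodd_ball with ⟨m, hm⟩
        omega
      -- pairing bound
      have hpair : ∀ j, j < k → (ball B j).card + (ball B (k - 1 - j)).card ≤ 2 * k := by
        intro j hj
        have hcd := cd_ball hp B j (k - 1 - j)
        have hidx : j + (k - 1 - j) = k - 1 := by omega
        rw [hidx] at hcd
        have hmono : (ball B (k-1)).card ≤ (ball B k).card :=
          Finset.card_le_card (ball_mono' B (by omega))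
        have h1 : 1 ≤ (ball B j).card := Finset.card_pos.mpr (ball_nonempty B j)
        have h2 : 1 ≤ (ball B (k - 1 - j)).card := Finset.card_pos.mpr (ball_nonempty B _)
        omega
      have hsum : ∑ j ∈ Finset.range k, (ball B j).card ≤ k * k := by
        have hrefl : ∑ j ∈ Finset.range k, (ball B (k - 1 - j)).card
            = ∑ j ∈ Finset.range k, (ball B j).card :=
          Finset.sum_range_reflect (fun j => (ball B j).card) k
        have h2 : ∑ j ∈ Finset.range k, ((ball B j).card + (ball B (k - 1 - j)).card)
            ≤ ∑ _j ∈ Finset.range k, 2 * k := by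
          apply Finset.sum_le_sum
          intro j hj
          exact hpair j (Finset.mem_range.mp hj)
        rw [Finset.sum_add_distrib, hrefl] at h2
        simp only [Finset.sum_const, Finset.card_range, smul_eq_mul] at h2
        have hx : k * (2 * k) = 2 * (k * k) := by ring
        omega
      -- Msum k = ∑_{j<k} (p - β_j)
      have hMeq : ∀ m : ℕ, Msum B m = ∑ j ∈ Finset.range m, (p - (ball B j).card) := by
        intro m
        induction m with
        | zero => simp [Msum_zero]
        | succ m ihm => rw [Msum_succ, ihm, Finset.sum_range_succ]
      have hMk : Msum B k + ∑ j ∈ Finset.range k, (ball B j).card = k * p := by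
        rw [hMeq k, ← Finset.sum_add_distrib]
        have : ∀ j ∈ Finset.range k, (p - (ball B j).card) + (ball B j).card = p := by
          intro j _
          have := ball_card_le (B := B) j
          omega
        rw [Finset.sum_congr rfl this]
        simp [mul_comm]
      have heq : k * (p - k) + k * k = k * p := by
        zify [show k ≤ p by omega]
        ring
      omega

lemma sum_over_H [NeZero p] (hp : p.Prime) (hodd : Odd p) (B : Finset (ZMod p))
    (H : Finset (ZMod p)) (h0 : (0 : ZMod p) ∉ H) {q : ℕ}
    (hq1 : q ≤ B.card) (hq2 : q ≤ p - B.card) :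
    q * (p - q) ≤ (∑ g ∈ H, Dc B g) + q * ((p - 1) - H.card) := by
  classical
  have hkey : q * (p - q) ≤ Msum B q :=
    key_lemma hp hodd B (min B.card (p - B.card) - q) q (by omega)
  have h1 : Msum B q = ∑ g ∈ Finset.univ.erase (0 : ZMod p), min q (Dc B g) := by
    rw [Msum, ← Finset.add_sum_erase _ _ (Finset.mem_univ (0 : ZMod p))]
    simp [Dc_zero]
  have hHsub : H ⊆ Finset.univ.erase (0 : ZMod p) := by
    intro x hx
    exact Finset.mem_erase.mpr ⟨fun h => h0 (h ▸ hx), Finset.mem_univ x⟩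
  have hsplit : ∑ g ∈ Finset.univ.erase (0:ZMod p), min q (Dc B g)
      = ∑ g ∈ (Finset.univ.erase (0:ZMod p)) \ H, min q (Dc B g)
        + ∑ g ∈ H, min q (Dc B g) := (Finset.sum_sdiff hHsub).symm
  have hcard_erase : (Finset.univ.erase (0:ZMod p)).card = p - 1 := by
    rw [Finset.card_erase_of_mem (Finset.mem_univ _)]
    simp [Finset.card_univ, ZMod.card]
  have hsdcard : ((Finset.univ.erase (0:ZMod p)) \ H).card = (p-1) - H.card := by
    rw [Finset.card_sdiff_of_subset hHsub, hcard_erase]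
  have hbound1 : ∑ g ∈ (Finset.univ.erase (0:ZMod p)) \ H, min q (Dc B g)
      ≤ ((p-1) - H.card) * q := by
    have := Finset.sum_le_card_nsmul ((Finset.univ.erase (0:ZMod p)) \ H)
      (fun g => min q (Dc B g)) q (fun x _ => min_le_left _ _)
    rw [hsdcard] at this
    simpa [smul_eq_mul] using this
  have hbound2 : ∑ g ∈ H, min q (Dc B g) ≤ ∑ g ∈ H, Dc B g :=
    Finset.sum_le_sum (fun g _ => min_le_right _ _)
  have hmc : ((p-1) - H.card) * q = q * ((p-1) - H.card) := mul_comm _ _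
  omega

lemma count_eq (A B : Finset (ZMod p)) :
    ((A ×ˢ B ×ˢ B).filter (fun x => x.2.2 = x.1 + x.2.1)).card = ∑ a ∈ A, Nc B a := by
  classical
  rw [Finset.card_filter, Finset.sum_product]
  refine Finset.sum_congr rfl (fun a _ => ?_)
  rw [Finset.sum_product]
  have hinner : ∀ b ∈ B, (∑ c ∈ B, if c = a + b then (1:ℕ) else 0)
      = (if b + a ∈ B then (1:ℕ) else 0) := by
    intro b _
    rw [Finset.sum_ite_eq' B (a + b) (fun _ => (1:ℕ))]
    simp [add_comm]
  rw [Finset.sum_congr rfl hinner, Nc, Finset.card_filter]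

/-- Upper skeleton: for any admissible `q`,
`count + q*(p-q) ≤ s*t + q*(p-s)` (all in ℕ). -/
lemma upper_skeleton [NeZero p] (hp : p.Prime) (hodd : Odd p) (A B : Finset (ZMod p))
    {q : ℕ} (hq1 : q ≤ B.card) (hq2 : q ≤ p - B.card) :
    ((A ×ˢ B ×ˢ B).filter (fun x => x.2.2 = x.1 + x.2.1)).card + q * (p - q)
      ≤ A.card * B.card + q * (p - A.card) := by
  classical
  have hcount : ((A ×ˢ B ×ˢ B).filter (fun x => x.2.2 = x.1 + x.2.1)).card
      + ∑ a ∈ A, Dc B a = A.card * B.card := by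
    rw [count_eq, ← Finset.sum_add_distrib]
    rw [Finset.sum_congr rfl (fun a _ => Nc_add_Dc B a)]
    simp [mul_comm]
  have hsumH := sum_over_H hp hodd B (A.erase 0) (Finset.notMem_erase _ _) hq1 hq2
  have herase_le : ∑ g ∈ A.erase 0, Dc B g ≤ ∑ a ∈ A, Dc B a :=
    Finset.sum_le_sum_of_subset (Finset.erase_subset _ _)
  have hcarde : A.card - 1 ≤ (A.erase 0).card := by
    rcases Finset.decidableMem (0 : ZMod p) A with h | h
    · rw [Finset.erase_eq_of_notMem h]; omega
    · rw [Finset.card_erase_of_mem h]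
  have hAcard : A.card ≤ p := by
    have := Finset.card_le_card (Finset.subset_univ A)
    simpa [Finset.card_univ, ZMod.card] using this
  have hmono : q * ((p-1) - (A.erase 0).card) ≤ q * (p - A.card) := by
    apply Nat.mul_le_mul_left
    omega
  omega

/-- Lower skeleton. -/
lemma lower_skeleton [NeZero p] (hp : p.Prime) (hodd : Odd p) (A B : Finset (ZMod p))
    {q : ℕ} (hq1 : q ≤ B.card) (hq2 : q ≤ p - B.card) :
    A.card * B.card + q * (p - q)
      ≤ ((A ×ˢ B ×ˢ B).filter (fun x => x.2.2 = x.1 + x.2.1)).card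
        + B.card * (p - B.card) + q * A.card := by
  classical
  have hcount : ((A ×ˢ B ×ˢ B).filter (fun x => x.2.2 = x.1 + x.2.1)).card
      + ∑ a ∈ A, Dc B a = A.card * B.card := by
    rw [count_eq, ← Finset.sum_add_distrib]
    rw [Finset.sum_congr rfl (fun a _ => Nc_add_Dc B a)]
    simp [mul_comm]
  have herase_eq : ∑ g ∈ A.erase 0, Dc B g = ∑ a ∈ A, Dc B a := by
    rcases Finset.decidableMem (0 : ZMod p) A with h | h
    · rw [Finset.erase_eq_of_notMem h]
    · exact Finset.sum_erase _ (Dc_zero B)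
  have hAsub : A.erase 0 ⊆ Finset.univ.erase (0 : ZMod p) := by
    intro x hx
    exact Finset.mem_erase.mpr ⟨(Finset.mem_erase.mp hx).1, Finset.mem_univ x⟩
  have hsplit : ∑ g ∈ Finset.univ.erase (0:ZMod p), Dc B g
      = ∑ g ∈ (Finset.univ.erase (0:ZMod p)) \ (A.erase 0), Dc B g
        + ∑ g ∈ A.erase 0, Dc B g := (Finset.sum_sdiff hAsub).symm
  have huniv : ∑ g ∈ Finset.univ.erase (0:ZMod p), Dc B g = B.card * (p - B.card) := by
    rw [← sum_Dc B, ← Finset.add_sum_erase _ _ (Finset.mem_univ (0 : ZMod p))]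
    simp [Dc_zero]
  set H := (Finset.univ.erase (0:ZMod p)) \ (A.erase 0) with hH
  have h0H : (0 : ZMod p) ∉ H := by
    simp [hH]
  have hsumH := sum_over_H hp hodd B H h0H hq1 hq2
  have hcard_erase : (Finset.univ.erase (0:ZMod p)).card = p - 1 := by
    rw [Finset.card_erase_of_mem (Finset.mem_univ _)]
    simp [Finset.card_univ, ZMod.card]
  have hHcard : H.card = (p-1) - (A.erase 0).card := by
    rw [hH, Finset.card_sdiff_of_subset hAsub, hcard_erase]
  have hec : (A.erase 0).card ≤ A.card := Finset.card_le_card (Finset.erase_subset _ _)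
  have hcarde : (p-1) - H.card ≤ A.card := by
    have := Finset.card_le_card hAsub
    rw [hcard_erase] at this
    omega
  have hmono : q * ((p-1) - H.card) ≤ q * A.card := Nat.mul_le_mul_left _ hcarde
  omega


end Stmt10Aux

open Stmt10Aux in

theorem stmt_10 {p : ℕ} [NeZero p] (hp : p.Prime) (hodd : Odd p) {s t : ℕ}
    (hs1 : 1 ≤ s) (hs2 : s ≤ p - 1) (ht1 : 1 ≤ t) (ht2 : t ≤ p - 1)
    (A B : Finset (ZMod p)) (hA : A.card = s) (hB : B.card = t) :
    fBound p s t ≤ (((A ×ˢ B ×ˢ B).filter (fun x => x.2.2 = x.1 + x.2.1)).card : ℤ)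
      ∧ (((A ×ˢ B ×ˢ B).filter (fun x => x.2.2 = x.1 + x.2.1)).card : ℤ) ≤ gBound p s t := by
  classical
  have hp2 : 2 ≤ p := hp.two_le
  have hp3 : 3 ≤ p := by
    rcases hodd with ⟨k, hk⟩
    omega
  have hdiv4 : ∀ X C : ℤ, X ≤ 4 * C + 3 → X / 4 ≤ C := by intro X C h; omega
  have hdiv4' : ∀ X C : ℤ, 4 * C ≤ X → C ≤ X / 4 := by intro X C h; omega
  constructor
  · -- lower bound
    rw [fBound]
    split_ifs with h1 h2
    · exact Int.natCast_nonneg _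
    · -- middle case : p - s + 2 ≤ 2t ≤ p + s - 2
      push_neg at h1
      have hm1 : p - s + 2 ≤ 2 * t := by omega
      have hm2 : 2 * t ≤ p + s - 2 := by omega
      set q : ℕ := (p - s) / 2 with hq
      have hq1 : q ≤ B.card := by rw [hB]; omega
      have hq2 : q ≤ p - B.card := by rw [hB]; omega
      have hsk := lower_skeleton hp hodd A B hq1 hq2
      rw [hA, hB] at hsk
      have hqp : q ≤ p := by omega
      have htp : t ≤ p := by omega
      have hsp : s ≤ p := by omega
      zify [hqp, htp, hsp] at hsk
      apply hdiv4
      have he : ((p : ℤ) - s - 2*q) = ((p - s) % 2 : ℕ) := by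
        have h' : (p - s : ℕ) = 2 * q + (p - s) % 2 := by omega
        have h'' := congrArg (fun n : ℕ => (n : ℤ)) h'
        push_cast at h''
        omega
      have he1 : (((p - s) % 2 : ℕ) : ℤ) ≤ 1 := by
        have : (p - s) % 2 ≤ 1 := by omega
        exact_mod_cast this
      have he0 : (0:ℤ) ≤ (((p - s) % 2 : ℕ) : ℤ) := Int.natCast_nonneg _
      have hE2 : ((p : ℤ) - s - 2*q)^2 ≤ 1 := by
        have h01 : (p - s) % 2 = 0 ∨ (p - s) % 2 = 1 := by omega
        rcases h01 with h01 | h01 <;> rw [he, h01] <;> norm_num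
      have hid : ((s:ℤ) + 2*t - p)^2 + 4*(t*((p:ℤ)-t)) + 4*((q:ℤ)*s)
          = 4*((s:ℤ)*t) + 4*((q:ℤ)*((p:ℤ)-q)) + ((p:ℤ) - s - 2*q)^2 := by ring
      linarith [hsk, hE2, hid]
    · -- case 3 : 2t ≥ p + s - 1
      push_neg at h1 h2
      set q : ℕ := p - t with hq
      have hq1 : q ≤ B.card := by rw [hq, hB]; omega
      have hq2 : q ≤ p - B.card := by rw [hq, hB]
      have hsk := lower_skeleton hp hodd A B hq1 hq2
      rw [hA, hB] at hsk
      have hqp : q ≤ p := by omega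
      have htp : t ≤ p := by omega
      zify [hqp, htp] at hsk
      have hqe : (q : ℤ) = (p:ℤ) - t := by rw [hq]; omega
      rw [hqe] at hsk
      have hid : (s:ℤ)*t + ((p:ℤ)-t)*((p:ℤ)-((p:ℤ)-t)) - t*((p:ℤ)-t) - ((p:ℤ)-t)*s
          = s*(2*t-(p:ℤ)) := by ring
      linarith [hsk, hid]
  · -- upper bound
    rw [gBound]
    split_ifs with h1 h2
    · -- 2t ≤ s
      set q : ℕ := t with hq
      have hq1 : q ≤ B.card := by rw [hB]
      have hq2 : q ≤ p - B.card := by rw [hB]; omega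
      have hsk := upper_skeleton hp hodd A B hq1 hq2
      rw [hA, hB] at hsk
      have htp : t ≤ p := by omega
      have hsp : s ≤ p := by omega
      zify [htp, hsp, (show q ≤ p by omega)] at hsk
      have hid : (s:ℤ)*t + (t:ℤ)*((p:ℤ)-s) = (t:ℤ)^2 + (t:ℤ)*((p:ℤ)-t) := by ring
      rw [← hq] at hid
      linarith [hsk, hid]
    · -- middle
      push_neg at h1
      set q : ℕ := s / 2 with hq
      have hq1 : q ≤ B.card := by rw [hB]; omega
      have hq2 : q ≤ p - B.card := by rw [hB]; omega
      have hsk := upper_skeleton hp hodd A B hq1 hq2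
      rw [hA, hB] at hsk
      have hqp : q ≤ p := by omega
      have htp : t ≤ p := by omega
      have hsp : s ≤ p := by omega
      zify [hqp, htp, hsp] at hsk
      apply hdiv4'
      have he : ((s : ℤ) - 2*q) = (s % 2 : ℕ) := by
        have h' : (s : ℕ) = 2 * q + s % 2 := by omega
        have h'' := congrArg (fun n : ℕ => (n : ℤ)) h'
        push_cast at h''
        omega
      have he1 : ((s % 2 : ℕ) : ℤ) ≤ 1 := by
        have : s % 2 ≤ 1 := by omega
        exact_mod_cast this
      have he0 : (0:ℤ) ≤ ((s % 2 : ℕ) : ℤ) := Int.natCast_nonneg _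
      have hE2 : ((s : ℤ) - 2*q)^2 ≤ 1 := by
        have h01 : s % 2 = 0 ∨ s % 2 = 1 := by omega
        rcases h01 with h01 | h01 <;> rw [he, h01] <;> norm_num
      have hid : 4*((s:ℤ)*t) + 4*((q:ℤ)*((p:ℤ)-s)) - 4*((q:ℤ)*((p:ℤ)-q))
          = (s:ℤ)*(4*t-s) + ((s:ℤ)-2*q)^2 := by ring
      linarith [hsk, hE2, hid]
    · -- case 3
      push_neg at h1 h2
      set q : ℕ := p - t with hq
      have hq1 : q ≤ B.card := by rw [hB]; omega
      have hq2 : q ≤ p - B.card := by rw [hB]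
      have hsk := upper_skeleton hp hodd A B hq1 hq2
      rw [hA, hB] at hsk
      have hqp : q ≤ p := by omega
      have htp : t ≤ p := by omega
      have hsp : s ≤ p := by omega
      zify [hqp, htp, hsp] at hsk
      have hqe : (q : ℤ) = (p:ℤ) - t := by rw [hq]; omega
      rw [hqe] at hsk
      have hid : (s:ℤ)*t + ((p:ℤ)-t)*((p:ℤ)-s) - ((p:ℤ)-t)*((p:ℤ)-((p:ℤ)-t))
          = s*(2*t-(p:ℤ)) + ((p:ℤ)-t)^2 := by ring
      linarith [hsk, hid]
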